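/- Index the 27 lines of the Fermat cubic surface x₀³+x₁³+x₂³+x₃³ = 0 over k̄ as L_{i,n,m} for i,n,m ∈ 𝔽₃, where L_{0,n,m} = {x₀ + ε₃ⁿx₁ = x₂ + ε₃ᵐx₃ = 0}, L_{1,n,m} = {x₀ + ε₃ⁿx₂ = x₁ + ε₃ᵐx₃ = 0}, L_{2,n,m} = {x₀ + ε₃ⁿx₃ = x₁ + ε₃ᵐx₂ = 0}. Then L_{0,n,m} ∩ L_{1,n',m'} ≠ ∅ if and only if m' - m + n - n' = 0 in 𝔽₃. -/

import Mathlib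

/-- The 27 lines `L_{i,n,m}` of the Fermat cubic surface `x₀³+x₁³+x₂³+x₃³ = 0`:
`L_{0,n,m} = {x₀ + ε₃ⁿx₁ = x₂ + ε₃ᵐx₃ = 0}`, `L_{1,n,m} = {x₀ + ε₃ⁿx₂ = x₁ + ε₃ᵐx₃ = 0}`,
`L_{2,n,m} = {x₀ + ε₃ⁿx₃ = x₁ + ε₃ᵐx₂ = 0}`. -/
def fermatLine (K : Type*) [Field K] (ε : K) :
    Fin 3 → ZMod 3 → ZMod 3 → Set (Projectivization K (Fin 4 → K))
  | 0, n, m => {p | p.rep 0 + ε ^ n.val * p.rep 1 = 0 ∧ p.rep 2 + ε ^ m.val * p.rep 3 = 0}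
  | 1, n, m => {p | p.rep 0 + ε ^ n.val * p.rep 2 = 0 ∧ p.rep 1 + ε ^ m.val * p.rep 3 = 0}
  | 2, n, m => {p | p.rep 0 + ε ^ n.val * p.rep 3 = 0 ∧ p.rep 1 + ε ^ m.val * p.rep 2 = 0}

lemma pow_eq_pow_iff_zmod {K : Type*} [Field K] {ε : K} (hε : IsPrimitiveRoot ε 3)
    (a b : ℕ) : ε ^ a = ε ^ b ↔ (a : ZMod 3) = (b : ZMod 3) := by
  have hu := hε.isUnit_unit (by norm_num : 3 ≠ 0)
  have hcoe : ∀ c : ℕ, ((hε.isUnit (by norm_num : (3:ℕ) ≠ 0)).unit : K) ^ c = ε ^ c := by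
    intro c; rw [IsUnit.unit_spec]
  rw [← hcoe a, ← hcoe b, ← Units.val_pow_eq_pow_val, ← Units.val_pow_eq_pow_val,
    Units.val_inj, pow_eq_pow_iff_modEq, ← hu.eq_orderOf, ZMod.natCast_eq_natCast_iff]

/-- `L_{0,n,m} ∩ L_{1,n',m'} ≠ ∅` if and only if `m' - m + n - n' = 0` in `𝔽₃`. -/
theorem stmt16 (K : Type*) [Field K] [IsAlgClosed K] [CharZero K]
    (ε : K) (hε : IsPrimitiveRoot ε 3) (n m n' m' : ZMod 3) :
    (fermatLine K ε 0 n m ∩ fermatLine K ε 1 n' m').Nonempty ↔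
      m' - m + n - n' = 0 := by
  have hε0 : ε ≠ 0 := hε.ne_zero three_ne_zero
  constructor
  · rintro ⟨p, ⟨h1, h2⟩, h3, h4⟩
    have hr3 : p.rep 3 ≠ 0 := by
      intro h
      apply p.rep_nonzero
      have e2 : p.rep 2 = 0 := by rw [h] at h2; simpa using h2
      have e0 : p.rep 0 = 0 := by rw [e2] at h3; simpa using h3
      have e1 : p.rep 1 = 0 := by
        rw [e0] at h1
        have hp := pow_ne_zero n.val hε0
        rw [zero_add, mul_eq_zero] at h1
        tauto
      funext i
      fin_cases i <;> simpa [e0, e1, e2, h]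
    have key : ε ^ (n.val + m'.val) * p.rep 3 = ε ^ (n'.val + m.val) * p.rep 3 := by
      rw [pow_add, pow_add]
      linear_combination -h1 + ε ^ n.val * h4 + h3 - ε ^ n'.val * h2
    have key' := mul_right_cancel₀ hr3 key
    rw [pow_eq_pow_iff_zmod hε] at key'
    push_cast at key'
    simp only [ZMod.natCast_val, ZMod.cast_id] at key'
    linear_combination key'
  · intro h
    have key : ε ^ n'.val * ε ^ m.val = ε ^ n.val * ε ^ m'.val := by
      rw [← pow_add, ← pow_add, pow_eq_pow_iff_zmod hε]
      push_cast
      simp only [ZMod.natCast_val, ZMod.cast_id]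
      linear_combination -h
    set v : Fin 4 → K := ![ε ^ n'.val * ε ^ m.val, -ε ^ m'.val, -ε ^ m.val, 1] with hv
    have hvne : v ≠ 0 := by
      intro hz
      have : v 3 = 0 := by rw [hz]; rfl
      simp [hv] at this
    refine ⟨Projectivization.mk K v hvne, ?_⟩
    obtain ⟨a, ha⟩ := Projectivization.exists_smul_eq_mk_rep K v hvne
    set r := (Projectivization.mk K v hvne).rep with hr
    have hc : ∀ i, (a : K) * v i = r i := fun i => congrFun ha i
    have ha0 : (a : K) ≠ 0 := a.ne_zero
    have c0 := hc 0
    have c1 := hc 1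
    have c2 := hc 2
    have c3 := hc 3
    simp only [hv, Matrix.cons_val_zero, Matrix.cons_val_one, Matrix.head_cons,
      Matrix.cons_val_two, Matrix.tail_cons, Matrix.cons_val_three] at c0 c1 c2 c3
    constructor <;> constructor
    · show r 0 + ε ^ n.val * r 1 = 0
      rw [← c0, ← c1]
      linear_combination (a : K) * key
    · show r 2 + ε ^ m.val * r 3 = 0
      rw [← c2, ← c3]; ring
    · show r 0 + ε ^ n'.val * r 2 = 0
      rw [← c0, ← c2]; ring
    · show r 1 + ε ^ m'.val * r 3 = 0
      rw [← c1, ← c3]; ring
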